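/- Let ρ_γ = (1−γ)|φ⟩⟨φ| + (γ/d)I with 0 < γ < 1 and {m_j} an orthonormal basis unbiased to φ, and set ψ_j = √(d ρ_γ) m_j. Then each ψ_j is a unit vector, ∑_{j=1}^d |ψ_j⟩⟨ψ_j| = d ρ_γ, and ∑_j (1/d)|⟨ψ_j, m_j⟩|² = (tr√ρ_γ)²/d. -/

import Mathlib

set_option maxHeartbeats 1000000

open Matrix BigOperators
open scoped ComplexOrder

/-- the states `ψ_j = √(dρ_γ)·m_j` are unit vectors, their projectors sum
to `dρ_γ`, and the uniform-weight guessing probability is `(tr√ρ_γ)²/d`. -/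
theorem noisy_state_FRIO_decomposition
    (d : ℕ) (hd : 2 ≤ d)
    (φ : Fin d → ℂ) (hφ : star φ ⬝ᵥ φ = 1)
    (γ : ℝ) (hγ0 : 0 < γ) (hγ1 : γ < 1)
    (m : Fin d → (Fin d → ℂ))
    (hm : ∀ i j, star (m i) ⬝ᵥ m j = if i = j then 1 else 0)
    (hub : ∀ j, Complex.normSq (star φ ⬝ᵥ m j) = 1 / d)
    (ρ R : Matrix (Fin d) (Fin d) ℂ)
    (hρ : ρ = ((1 - γ : ℝ)) • vecMulVec φ (star φ) +
        ((γ / d : ℝ)) • (1 : Matrix (Fin d) (Fin d) ℂ))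
    (hR : R.PosSemidef) (hRsq : R * R = ρ)
    (ψ : Fin d → (Fin d → ℂ)) (hψ : ∀ j, ψ j = Real.sqrt d • (R *ᵥ m j)) :
    (∀ j, star (ψ j) ⬝ᵥ ψ j = 1) ∧
    (∑ j, vecMulVec (ψ j) (star (ψ j))) = (d : ℝ) • ρ ∧
    (∑ j, (1 / (d : ℝ)) * Complex.normSq (star (ψ j) ⬝ᵥ m j)) = (R.trace.re) ^ 2 / d := by
  have hd0 : (0:ℝ) < d := by
    have : (0:ℕ) < d := lt_of_lt_of_le (by norm_num) hd
    exact_mod_cast this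
  have hdC : (d:ℂ) ≠ 0 := by exact_mod_cast hd0.ne'
  set a : ℝ := Real.sqrt (1 - γ + γ / d) with ha_def
  set b : ℝ := Real.sqrt (γ / d) with hb_def
  have hbd0 : (0:ℝ) ≤ γ / d := by positivity
  have had0 : (0:ℝ) ≤ 1 - γ + γ / d := by
    have : (0:ℝ) ≤ 1 - γ := by linarith
    linarith
  have ha2 : a ^ 2 = 1 - γ + γ / d := Real.sq_sqrt had0
  have hb2 : b ^ 2 = γ / d := Real.sq_sqrt hbd0
  have hab : b ≤ a := Real.sqrt_le_sqrt (by linarith)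
  have hb0 : (0:ℝ) ≤ b := Real.sqrt_nonneg _
  set P : Matrix (Fin d) (Fin d) ℂ := vecMulVec φ (star φ) with hP_def
  -- action of P on vectors
  have hPv : ∀ x : Fin d → ℂ, P *ᵥ x = (star φ ⬝ᵥ x) • φ := by
    intro x
    ext i
    simp only [hP_def, mulVec, dotProduct, vecMulVec_apply, Pi.smul_apply, smul_eq_mul]
    rw [Finset.sum_mul]
    exact Finset.sum_congr rfl fun k _ => by ring
  -- quadratic form of P
  have hPquad : ∀ x : Fin d → ℂ,
      star x ⬝ᵥ P *ᵥ x = ((Complex.normSq (star φ ⬝ᵥ x) : ℝ) : ℂ) := by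
    intro x
    rw [hPv x, dotProduct_smul, star_dotProduct, smul_eq_mul, Complex.star_def,
      Complex.normSq_conj, mul_comm]
    exact Complex.mul_conj _
  -- P is idempotent
  have hPP : P * P = P := by
    ext i j
    simp only [hP_def, mul_apply, vecMulVec_apply]
    have h1 : ∀ k, (φ i * star φ k) * (φ k * star φ j)
        = (φ i * star φ j) * (star φ k * φ k) := fun k => by ring
    rw [Finset.sum_congr rfl (fun k _ => h1 k), ← Finset.mul_sum]
    have h2 : (∑ k, star φ k * φ k) = 1 := by simpa [dotProduct] using hφ
    rw [h2, mul_one]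
  -- P is Hermitian
  have hPH : P.IsHermitian := by
    show Pᴴ = P
    ext i j
    simp only [hP_def, conjTranspose_apply, vecMulVec_apply, Pi.star_apply, star_mul',
      star_star]
    ring
  -- the explicit square root
  set S : Matrix (Fin d) (Fin d) ℂ := ((a - b : ℝ)) • P + (b : ℝ) • 1 with hS_def
  have hSsq : S * S = ρ := by
    have expand : S * S = ((a-b)*(a-b) : ℝ) • (P * P)
        + (((a-b)*b + b*(a-b) : ℝ)) • P + ((b*b : ℝ)) • (1 : Matrix (Fin d) (Fin d) ℂ) := by
      simp only [hS_def, add_mul, mul_add, smul_mul_assoc, mul_smul_comm, smul_smul,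
        Matrix.mul_one, Matrix.one_mul, add_smul]
      module
    have e1 : ((a-b)*(a-b) + ((a-b)*b + b*(a-b)) : ℝ) = 1 - γ := by nlinarith [ha2, hb2]
    have e2 : (b*b : ℝ) = γ / d := by nlinarith [hb2]
    rw [expand, hPP, ← add_smul, e1, e2, hρ]
  have hSH : S.IsHermitian := by
    show Sᴴ = S
    rw [hS_def, conjTranspose_add, conjTranspose_smul, conjTranspose_smul,
      conjTranspose_one, hPH.eq, star_trivial, star_trivial]
  have hSP : S.PosSemidef := by
    refine .of_dotProduct_mulVec_nonneg hSH fun x => ?_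
    have h1 : star x ⬝ᵥ S *ᵥ x
        = ((a - b : ℝ)) • (star x ⬝ᵥ P *ᵥ x) + (b : ℝ) • (star x ⬝ᵥ x) := by
      rw [hS_def, add_mulVec, smul_mulVec, smul_mulVec, one_mulVec,
        dotProduct_add, dotProduct_smul, dotProduct_smul]
    rw [h1, hPquad x]
    apply add_nonneg
    · rw [Complex.real_smul]
      apply mul_nonneg
      · exact Complex.zero_le_real.mpr (by linarith)
      · exact Complex.zero_le_real.mpr (Complex.normSq_nonneg _)
    · rw [Complex.real_smul]
      exact mul_nonneg (Complex.zero_le_real.mpr hb0) (dotProduct_star_self_nonneg x)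
  -- R is the explicit square root
  have hRS : R = S := by
    open scoped MatrixOrder in
    exact (CFC.sq_eq_sq_iff R S hR.nonneg hSP.nonneg).mp (by rw [pow_two, pow_two, hRsq, hSsq])
  -- completeness of the basis m
  have hcomp : (∑ j, vecMulVec (m j) (star (m j))) = (1 : Matrix (Fin d) (Fin d) ℂ) := by
    classical
    set C : Matrix (Fin d) (Fin d) ℂ := Matrix.of (fun i j => m j i) with hC_def
    have h1 : Cᴴ * C = 1 := by
      ext i j
      have h := hm i j
      simp only [dotProduct, Pi.star_apply] at h
      simp only [mul_apply, conjTranspose_apply, hC_def, Matrix.of_apply, one_apply]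
      exact h
    have h2 : C * Cᴴ = 1 := mul_eq_one_comm.mp h1
    have h3 : (∑ j, vecMulVec (m j) (star (m j))) = C * Cᴴ := by
      ext i k
      simp [mul_apply, vecMulVec_apply, conjTranspose_apply, hC_def, Matrix.sum_apply]
    rw [h3, h2]
  -- quadratic form of ρ on R-images
  have hquad : ∀ x : Fin d → ℂ, star (R *ᵥ x) ⬝ᵥ (R *ᵥ x) = star x ⬝ᵥ (ρ *ᵥ x) := by
    intro x
    rw [star_mulVec, hR.isHermitian.eq, ← dotProduct_mulVec, mulVec_mulVec, hRsq]
  have hmm1 : ∀ j, star (m j) ⬝ᵥ m j = 1 := by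
    intro j
    simpa using hm j j
  have hρm : ∀ j, star (m j) ⬝ᵥ (ρ *ᵥ m j) = ((1/(d:ℝ) : ℝ) : ℂ) := by
    intro j
    rw [hρ, add_mulVec, smul_mulVec, smul_mulVec, one_mulVec,
      dotProduct_add, dotProduct_smul, dotProduct_smul, hPquad (m j), hub j, hmm1 j,
      Complex.real_smul, Complex.real_smul]
    push_cast
    field_simp
    ring
  have part1 : ∀ j, star (ψ j) ⬝ᵥ ψ j = 1 := by
    intro j
    rw [hψ j, star_smul, star_trivial, smul_dotProduct, dotProduct_smul, smul_smul,
      Real.mul_self_sqrt hd0.le, hquad (m j), hρm j, Complex.real_smul]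
    push_cast
    field_simp
  -- part 2
  have hstarψ : ∀ j, star (ψ j) = Real.sqrt d • (star (m j) ᵥ* R) := by
    intro j
    rw [hψ j, star_smul, star_trivial, star_mulVec, hR.isHermitian.eq]
  have auxVV : ∀ (x y : Fin d → ℂ),
      vecMulVec (R *ᵥ x) (star y ᵥ* R) = R * vecMulVec x (star y) * R := by
    intro x y
    ext i k
    simp only [vecMulVec_apply, mul_apply, vecMul, mulVec, dotProduct, Pi.star_apply]
    rw [Finset.sum_mul_sum]
    rw [Finset.sum_comm]
    simp_rw [Finset.sum_mul]
    exact Finset.sum_congr rfl fun q _ => Finset.sum_congr rfl fun p _ => by ring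
  have key : ∀ j, vecMulVec (ψ j) (star (ψ j))
      = (d:ℝ) • (R * vecMulVec (m j) (star (m j)) * R) := by
    intro j
    rw [hψ j]
    have hst : star (Real.sqrt d • (R *ᵥ m j)) = Real.sqrt d • (star (m j) ᵥ* R) := by
      rw [star_smul, star_trivial, star_mulVec, hR.isHermitian.eq]
    rw [hst]
    have hsc : vecMulVec (Real.sqrt d • (R *ᵥ m j)) (Real.sqrt d • (star (m j) ᵥ* R))
        = ((Real.sqrt d * Real.sqrt d : ℝ)) • vecMulVec (R *ᵥ m j) (star (m j) ᵥ* R) := by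
      ext i k
      simp only [vecMulVec_apply, Pi.smul_apply, Matrix.smul_apply, Complex.real_smul]
      push_cast
      ring
    rw [hsc, Real.mul_self_sqrt hd0.le, auxVV]
  have part2 : (∑ j, vecMulVec (ψ j) (star (ψ j))) = (d : ℝ) • ρ := by
    calc (∑ j, vecMulVec (ψ j) (star (ψ j)))
        = ∑ j, (d:ℝ) • (R * vecMulVec (m j) (star (m j)) * R) :=
          Finset.sum_congr rfl fun j _ => key j
      _ = (d:ℝ) • ((∑ j, R * vecMulVec (m j) (star (m j))) * R) := by
          rw [← Finset.smul_sum, ← Finset.sum_mul]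
      _ = (d:ℝ) • (R * (∑ j, vecMulVec (m j) (star (m j))) * R) := by
          rw [← Finset.mul_sum]
      _ = (d : ℝ) • ρ := by rw [hcomp, Matrix.mul_one, hRsq]
  -- part 3
  have hmRm : ∀ j, star (m j) ⬝ᵥ (R *ᵥ m j) = (((a - b) / d + b : ℝ) : ℂ) := by
    intro j
    rw [hRS, hS_def, add_mulVec, smul_mulVec, smul_mulVec, one_mulVec,
      dotProduct_add, dotProduct_smul, dotProduct_smul, hPquad (m j), hub j, hmm1 j,
      Complex.real_smul, Complex.real_smul]
    push_cast
    ring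
  have hψm : ∀ j, star (ψ j) ⬝ᵥ m j = ((Real.sqrt d * ((a - b)/d + b) : ℝ) : ℂ) := by
    intro j
    rw [hstarψ j, smul_dotProduct, ← dotProduct_mulVec, hmRm j, Complex.real_smul]
    push_cast
    ring
  have htr : R.trace.re = (a - b) + b * d := by
    have hPtr : P.trace = 1 := by
      have h : P.trace = ∑ i, star φ i * φ i := by
        simp only [hP_def, trace, diag_apply, vecMulVec_apply]
        exact Finset.sum_congr rfl fun i _ => by ring
      have h2 : (∑ i, star φ i * φ i) = 1 := by simpa [dotProduct] using hφ
      rw [h, h2]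
    have : R.trace = (((a - b) + b * d : ℝ) : ℂ) := by
      rw [hRS, hS_def, trace_add, trace_smul, trace_smul, trace_one, hPtr]
      simp only [smul_eq_mul, Complex.real_smul, Fintype.card_fin]
      push_cast
      ring
    rw [this, Complex.ofReal_re]
  refine ⟨part1, part2, ?_⟩
  have hterm : ∀ j, (1 / (d : ℝ)) * Complex.normSq (star (ψ j) ⬝ᵥ m j)
      = ((a - b)/d + b)^2 := by
    intro j
    rw [hψm j, Complex.normSq_ofReal]
    have h1 : (Real.sqrt d * ((a - b)/d + b)) * (Real.sqrt d * ((a - b)/d + b))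
        = (Real.sqrt d * Real.sqrt d) * ((a - b)/d + b)^2 := by ring
    rw [h1, Real.mul_self_sqrt hd0.le]
    field_simp
  rw [Finset.sum_congr rfl (fun j _ => hterm j), Finset.sum_const, Finset.card_univ,
    Fintype.card_fin, nsmul_eq_mul, htr]
  field_simp
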